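/- Let H be a real Hilbert space and Φ_K : ℝ^s → H a feature map with B := sup_{a ∈ ℝ^s} ‖Φ_K(a)‖ < ∞ and ‖Φ_K(a) − Φ_K(b)‖ ≤ L_K ‖a − b‖ for all a, b ∈ ℝ^s. Let {φ_ψ : ℝ^d → ℝ^s}_{ψ ∈ Ψ} be a family of maps that are uniformly Lipschitz: ‖φ_ψ(x) − φ_ψ(y)‖ ≤ L_φ ‖x − y‖ for all ψ ∈ Ψ and x, y ∈ ℝ^d. If (P_n) is a sequence of Borel probability measures on ℝ^d converging weakly (in distribution) to P, then sup_{ψ ∈ Ψ} MMD_{k_ψ}(P_n, P) → 0 as n → ∞, where k_ψ is the kernel with feature map Φ_K ∘ φ_ψ. -/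

import Mathlib

open MeasureTheory Filter
open scoped Topology

open Set Metric ENNReal BoundedContinuousFunction

lemma aux_shift_integral (F : ℝ → ℝ) (c M : ℝ) :
    ∫ t in Ioc (0:ℝ) M, F (t - c) = ∫ t in Ioc (-c) (M - c), F t := by
  have key : ∀ t : ℝ, (Ioc (0:ℝ) M).indicator (fun t => F (t - c)) t
      = (Ioc (-c) (M - c)).indicator F (t - c) := by
    intro t
    have hmem : t ∈ Ioc (0:ℝ) M ↔ t - c ∈ Ioc (-c) (M - c) := by
      simp only [mem_Ioc]
      constructor <;> rintro ⟨h1, h2⟩ <;> exact ⟨by linarith, by linarith⟩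
    by_cases h : t ∈ Ioc (0:ℝ) M
    · rw [indicator_of_mem h, indicator_of_mem (hmem.mp h)]
    · rw [indicator_of_notMem h, indicator_of_notMem (fun hh => h (hmem.mpr hh))]
  calc ∫ t in Ioc (0:ℝ) M, F (t - c)
      = ∫ t, (Ioc (0:ℝ) M).indicator (fun t => F (t - c)) t :=
        (integral_indicator measurableSet_Ioc).symm
    _ = ∫ t, (Ioc (-c) (M - c)).indicator F (t - c) := by simp_rw [key]
    _ = ∫ t, (Ioc (-c) (M - c)).indicator F t :=
        integral_sub_right_eq_self ((Ioc (-c) (M - c)).indicator F) c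
    _ = ∫ t in Ioc (-c) (M - c), F t := integral_indicator measurableSet_Ioc

lemma aux_integral_sub_le
    {Ω : Type*} [MeasurableSpace Ω] [PseudoMetricSpace Ω] [OpensMeasurableSpace Ω]
    (μ ν : Measure Ω) [IsProbabilityMeasure μ] [IsProbabilityMeasure ν]
    {ε C L : ℝ} (hε : 0 < ε) (hC : 0 ≤ C) (hL : 0 ≤ L)
    (hμν : levyProkhorovEDist μ ν < ENNReal.ofReal ε)
    (f : Ω → ℝ) (hfb : ∀ x, |f x| ≤ C)
    (hfl : ∀ x y, |f x - f y| ≤ L * dist x y) :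
    ∫ x, f x ∂μ - ∫ x, f x ∂ν ≤ ε * (L + 2 * C) := by
  have hcont : Continuous f := by
    apply (LipschitzWith.of_dist_le_mul (K := L.toNNReal) (f := f) ?_).continuous
    intro x y
    rw [Real.dist_eq, Real.coe_toNNReal L hL]
    exact hfl x y
  set g : Ω →ᵇ ℝ := BoundedContinuousFunction.ofNormedAddCommGroup (fun x => f x + C)
    (hcont.add continuous_const) (2 * C)
    (fun x => by
      have := hfb x
      rw [Real.norm_eq_abs]
      rw [abs_le] at this ⊢
      refine ⟨?_, ?_⟩ <;> · show _ ≤ _; linarith [this.1, this.2]) with hg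
  have hgx : ∀ x, g x = f x + C := fun x => rfl
  have hgnn : ∀ x, 0 ≤ g x := fun x => by have := (abs_le.mp (hfb x)).1; rw [hgx]; linarith
  have hMnn : 0 ≤ ‖g‖ := norm_nonneg g
  have hM2C : ‖g‖ ≤ 2 * C :=
    BoundedContinuousFunction.norm_ofNormedAddCommGroup_le _ (by linarith) _
  set M := ‖g‖ with hM
  set c := L * ε with hc
  have hcnn : 0 ≤ c := mul_nonneg hL hε.le
  set F : ℝ → ℝ := fun t => (ν {a | t ≤ g a}).toReal with hF
  have hFanti : Antitone F := by
    intro s t hst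
    exact ENNReal.toReal_mono (measure_ne_top _ _)
      (measure_mono (fun a ha => le_trans hst ha))
  have hFnn : ∀ t, 0 ≤ F t := fun t => ENNReal.toReal_nonneg
  have hF1 : ∀ t, F t ≤ 1 := fun t => by
    rw [hF]
    simp only
    rw [show (1:ℝ) = (ν univ).toReal by simp]
    exact ENNReal.toReal_mono (measure_ne_top _ _) (measure_mono (subset_univ _))
  have hFint : ∀ a b : ℝ, IntegrableOn F (Ioc a b) := by
    intro a b
    apply Measure.integrableOn_of_bounded (M := 1) measure_Ioc_lt_top.ne
      hFanti.measurable.aestronglyMeasurable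
    exact Eventually.of_forall fun t => by
      rw [Real.norm_eq_abs, abs_of_nonneg (hFnn t)]; exact hF1 t
  -- the key LP bound
  have h1 := BoundedContinuousFunction.integral_le_of_levyProkhorovEDist_lt μ ν hε hμν g
    (Eventually.of_forall hgnn)
  simp only [measureReal_def] at h1
  -- thickening inclusion
  have h2 : ∀ t : ℝ, (ν (thickening ε {a | t ≤ g a})).toReal ≤ F (t - c) := by
    intro t
    apply ENNReal.toReal_mono (measure_ne_top _ _)
    apply measure_mono
    intro x hx
    rw [mem_thickening_iff] at hx
    obtain ⟨z, hz, hdist⟩ := hx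
    simp only [mem_setOf_eq] at hz ⊢
    have h3 : |f z - f x| ≤ L * dist z x := hfl z x
    have h4 : L * dist z x ≤ L * ε := by
      rw [dist_comm]
      exact mul_le_mul_of_nonneg_left hdist.le hL
    have h5 := (abs_le.mp h3).2
    rw [hgx] at hz ⊢
    rw [hc]
    linarith
  rw [← hM] at h1
  have hTanti : Antitone (fun t : ℝ => (ν (thickening ε {a | t ≤ g a})).toReal) := by
    intro u v huv
    exact ENNReal.toReal_mono (measure_ne_top _ _)
      (measure_mono (thickening_subset_of_subset ε (fun a ha => huv.trans ha)))
  have hTint : IntegrableOn (fun t : ℝ => (ν (thickening ε {a | t ≤ g a})).toReal)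
      (Ioc 0 M) := by
    apply Measure.integrableOn_of_bounded (M := 1) measure_Ioc_lt_top.ne
      hTanti.measurable.aestronglyMeasurable
    refine Eventually.of_forall fun t => ?_
    rw [Real.norm_eq_abs, abs_of_nonneg ENNReal.toReal_nonneg,
      show (1:ℝ) = (ν univ).toReal by simp]
    exact ENNReal.toReal_mono (measure_ne_top _ _) (measure_mono (subset_univ _))
  have hFcanti : Antitone (fun t : ℝ => F (t - c)) := fun u v huv =>
    hFanti (by linarith)
  have hFcint : IntegrableOn (fun t : ℝ => F (t - c)) (Ioc 0 M) := by
    apply Measure.integrableOn_of_bounded (M := 1) measure_Ioc_lt_top.ne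
      hFcanti.measurable.aestronglyMeasurable
    exact Eventually.of_forall fun t => by
      rw [Real.norm_eq_abs, abs_of_nonneg (hFnn _)]; exact hF1 _
  have h3 : (∫ t in Ioc (0:ℝ) M, (ν (thickening ε {a | t ≤ g a})).toReal)
      ≤ ∫ t in Ioc (0:ℝ) M, F (t - c) :=
    setIntegral_mono_on hTint hFcint measurableSet_Ioc (fun t _ => h2 t)
  have h4 : (∫ t in Ioc (0:ℝ) M, F (t - c)) = ∫ t in Ioc (-c) (M - c), F t :=
    aux_shift_integral F c M
  have h5 : (∫ t in Ioc (-c) (M - c), F t) ≤ ∫ t in Ioc (-c) M, F t :=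
    setIntegral_mono_set (hFint _ _) (Eventually.of_forall hFnn)
      (HasSubset.Subset.eventuallyLE (Ioc_subset_Ioc_right (by linarith)))
  have hsplit : (∫ t in Ioc (-c) M, F t)
      = (∫ t in Ioc (-c) (0:ℝ), F t) + ∫ t in Ioc (0:ℝ) M, F t := by
    rw [← Ioc_union_Ioc_eq_Ioc (by linarith : -c ≤ (0:ℝ)) hMnn]
    exact setIntegral_union (Ioc_disjoint_Ioc_of_le le_rfl) measurableSet_Ioc (hFint _ _) (hFint _ _)
  have h7 : (∫ t in Ioc (-c) (0:ℝ), F t) ≤ c := by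
    have hb : (∫ t in Ioc (-c) (0:ℝ), F t) ≤ ∫ _t in Ioc (-c) (0:ℝ), (1:ℝ) :=
      setIntegral_mono_on (hFint _ _) (integrableOn_const measure_Ioc_lt_top.ne)
        measurableSet_Ioc (fun t _ => hF1 t)
    rw [setIntegral_const, Real.volume_real_Ioc_of_le (by linarith : -c ≤ (0:ℝ))] at hb
    simpa [ENNReal.toReal_ofReal hcnn] using hb
  have h8 : (∫ x, g x ∂ν) = ∫ t in Ioc (0:ℝ) M, F t := by
    rw [← hM] at *
    exact BoundedContinuousFunction.integral_eq_integral_meas_le g ν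
      (Eventually.of_forall hgnn)
  have hintμ : (∫ x, f x ∂μ) = (∫ x, g x ∂μ) - C := by
    have he : (fun x => f x) = fun x => g x - C := funext fun x => by rw [hgx]; ring
    rw [he, integral_sub (g.integrable μ) (integrable_const C), integral_const]
    simp
  have hintν : (∫ x, f x ∂ν) = (∫ x, g x ∂ν) - C := by
    have he : (fun x => f x) = fun x => g x - C := funext fun x => by rw [hgx]; ring
    rw [he, integral_sub (g.integrable ν) (integrable_const C), integral_const]
    simp
  have hεM : ε * M ≤ ε * (2 * C) := mul_le_mul_of_nonneg_left hM2C hε.le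
  rw [hc] at *
  linarith

open scoped RealInnerProductSpace in
lemma aux_abs_integral_sub_le
    {Ω : Type*} [MeasurableSpace Ω] [PseudoMetricSpace Ω] [OpensMeasurableSpace Ω]
    (μ ν : Measure Ω) [IsProbabilityMeasure μ] [IsProbabilityMeasure ν]
    {ε C L : ℝ} (hε : 0 < ε) (hC : 0 ≤ C) (hL : 0 ≤ L)
    (hμν : levyProkhorovEDist μ ν < ENNReal.ofReal ε)
    (f : Ω → ℝ) (hfb : ∀ x, |f x| ≤ C)
    (hfl : ∀ x y, |f x - f y| ≤ L * dist x y) :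
    |(∫ x, f x ∂μ) - ∫ x, f x ∂ν| ≤ ε * (L + 2 * C) := by
  rw [abs_le]
  constructor
  · have := aux_integral_sub_le ν μ hε hC hL (levyProkhorovEDist_comm μ ν ▸ hμν) f hfb hfl
    linarith
  · exact aux_integral_sub_le μ ν hε hC hL hμν f hfb hfl

open scoped RealInnerProductSpace in
lemma aux_norm_integral_sub_le
    {Ω : Type*} [MeasurableSpace Ω] [PseudoMetricSpace Ω] [OpensMeasurableSpace Ω]
    [SecondCountableTopology Ω]
    {H : Type*} [NormedAddCommGroup H] [InnerProductSpace ℝ H] [CompleteSpace H]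
    (μ ν : Measure Ω) [IsProbabilityMeasure μ] [IsProbabilityMeasure ν]
    {ε C L : ℝ} (hε : 0 < ε) (hC : 0 ≤ C) (hL : 0 ≤ L)
    (hμν : levyProkhorovEDist μ ν < ENNReal.ofReal ε)
    (g : Ω → H) (hgb : ∀ x, ‖g x‖ ≤ C) (hgl : ∀ x y, ‖g x - g y‖ ≤ L * dist x y) :
    ‖(∫ x, g x ∂μ) - ∫ x, g x ∂ν‖ ≤ ε * (L + 2 * C) := by
  have hcont : Continuous g := by
    apply (LipschitzWith.of_dist_le_mul (K := L.toNNReal) (f := g) ?_).continuous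
    intro x y
    rw [dist_eq_norm, Real.coe_toNNReal L hL]
    exact hgl x y
  have hintμ : Integrable g μ :=
    (integrable_const C).mono' hcont.aestronglyMeasurable (Eventually.of_forall hgb)
  have hintν : Integrable g ν :=
    (integrable_const C).mono' hcont.aestronglyMeasurable (Eventually.of_forall hgb)
  set v := (∫ x, g x ∂μ) - ∫ x, g x ∂ν with hv
  rcases eq_or_ne v 0 with h0 | h0
  · rw [h0, norm_zero]; positivity
  have hv0 : ‖v‖ ≠ 0 := norm_ne_zero_iff.mpr h0
  set u := ‖v‖⁻¹ • v with hu
  have hnu : ‖u‖ = 1 := by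
    rw [hu, norm_smul, norm_inv, norm_norm, inv_mul_cancel₀ hv0]
  set f : Ω → ℝ := fun x => ⟪u, g x⟫ with hf
  have hfb : ∀ x, |f x| ≤ C := fun x => by
    calc |f x| ≤ ‖u‖ * ‖g x‖ := abs_real_inner_le_norm u (g x)
      _ = ‖g x‖ := by rw [hnu, one_mul]
      _ ≤ C := hgb x
  have hfl : ∀ x y, |f x - f y| ≤ L * dist x y := fun x y => by
    calc |f x - f y| = |⟪u, g x - g y⟫| := by rw [hf]; simp [inner_sub_right]
      _ ≤ ‖u‖ * ‖g x - g y‖ := abs_real_inner_le_norm _ _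
      _ = ‖g x - g y‖ := by rw [hnu, one_mul]
      _ ≤ L * dist x y := hgl x y
  have hkey : ‖v‖ = (∫ x, f x ∂μ) - ∫ x, f x ∂ν := by
    rw [hf]
    rw [integral_inner hintμ u, integral_inner hintν u, ← inner_sub_right, ← hv, hu,
      real_inner_smul_left, real_inner_self_eq_norm_sq, sq]
    field_simp
  rw [hkey]
  exact le_trans (le_abs_self _) (aux_abs_integral_sub_le μ ν hε hC hL hμν f hfb hfl)

/-- If the feature map `Φ_K : ℝ^s → H` is bounded and `L_K`-Lipschitz and
the family `φ ψ : ℝ^d → ℝ^s` is uniformly `L_φ`-Lipschitz, then the optimized MMD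
`sup_ψ MMD_{k_ψ}(P_n, P)` with `k_ψ = K ∘ φ_ψ` tends to `0` whenever `P_n` converges
weakly (in distribution) to `P`. -/
theorem optimized_mmd_tendsto_zero_of_weak_convergence
    {d s : ℕ} {H : Type*} [NormedAddCommGroup H] [InnerProductSpace ℝ H] [CompleteSpace H]
    (ΦK : EuclideanSpace ℝ (Fin s) → H)
    (B LK : ℝ) (hB : ∀ a, ‖ΦK a‖ ≤ B)
    (hLK : ∀ a b, ‖ΦK a - ΦK b‖ ≤ LK * ‖a - b‖)
    {Ψ : Type*} (φ : Ψ → EuclideanSpace ℝ (Fin d) → EuclideanSpace ℝ (Fin s))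
    (Lφ : ℝ) (hφLip : ∀ ψ x y, ‖φ ψ x - φ ψ y‖ ≤ Lφ * ‖x - y‖)
    (P : ℕ → ProbabilityMeasure (EuclideanSpace ℝ (Fin d)))
    (P₀ : ProbabilityMeasure (EuclideanSpace ℝ (Fin d)))
    (hconv : Tendsto P atTop (𝓝 P₀)) :
    Tendsto
      (fun n => ⨆ ψ : Ψ,
        ‖(∫ x, ΦK (φ ψ x) ∂(P n : Measure (EuclideanSpace ℝ (Fin d)))) -
          ∫ x, ΦK (φ ψ x) ∂(P₀ : Measure (EuclideanSpace ℝ (Fin d)))‖)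
      atTop (𝓝 0) := by
  rcases isEmpty_or_nonempty Ψ with hΨ | hΨ
  · simp only [Real.iSup_of_isEmpty]
    exact tendsto_const_nhds
  -- Lévy-Prokhorov distance tends to zero
  have hLP : Tendsto
      (fun n => levyProkhorovDist ((P n) : Measure (EuclideanSpace ℝ (Fin d)))
        (P₀ : Measure (EuclideanSpace ℝ (Fin d)))) atTop (𝓝 0) := by
    have hc : Tendsto
        (fun n => LevyProkhorov.ofMeasure (P n)) atTop
        (𝓝 (LevyProkhorov.ofMeasure P₀)) :=
      (LevyProkhorov.continuous_ofMeasure_probabilityMeasure.tendsto P₀).comp hconv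
    exact tendsto_iff_dist_tendsto_zero.mp hc
  set L : ℝ := max LK 0 * max Lφ 0 with hLdef
  have hL : 0 ≤ L := mul_nonneg (le_max_right _ _) (le_max_right _ _)
  have hB0 : 0 ≤ B := le_trans (norm_nonneg _) (hB 0)
  have hgl : ∀ (ψ : Ψ) (x y : EuclideanSpace ℝ (Fin d)),
      ‖ΦK (φ ψ x) - ΦK (φ ψ y)‖ ≤ L * dist x y := by
    intro ψ x y
    calc ‖ΦK (φ ψ x) - ΦK (φ ψ y)‖ ≤ LK * ‖φ ψ x - φ ψ y‖ := hLK _ _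
      _ ≤ max LK 0 * ‖φ ψ x - φ ψ y‖ :=
          mul_le_mul_of_nonneg_right (le_max_left _ _) (norm_nonneg _)
      _ ≤ max LK 0 * (Lφ * ‖x - y‖) :=
          mul_le_mul_of_nonneg_left (hφLip ψ x y) (le_max_right _ _)
      _ ≤ max LK 0 * (max Lφ 0 * ‖x - y‖) :=
          mul_le_mul_of_nonneg_left
            (mul_le_mul_of_nonneg_right (le_max_left _ _) (norm_nonneg _))
            (le_max_right _ _)
      _ = L * dist x y := by rw [hLdef, dist_eq_norm]; ring
  have key : ∀ n : ℕ,
      (⨆ ψ : Ψ,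
        ‖(∫ x, ΦK (φ ψ x) ∂(P n : Measure (EuclideanSpace ℝ (Fin d)))) -
          ∫ x, ΦK (φ ψ x) ∂(P₀ : Measure (EuclideanSpace ℝ (Fin d)))‖)
      ≤ (levyProkhorovDist ((P n) : Measure (EuclideanSpace ℝ (Fin d)))
          (P₀ : Measure (EuclideanSpace ℝ (Fin d))) + 1 / (n + 1)) * (L + 2 * B) := by
    intro n
    set εn : ℝ := levyProkhorovDist ((P n) : Measure (EuclideanSpace ℝ (Fin d)))
      (P₀ : Measure (EuclideanSpace ℝ (Fin d))) + 1 / (n + 1) with hεndef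
    have hdist_nn : (0:ℝ) ≤ levyProkhorovDist ((P n) : Measure (EuclideanSpace ℝ (Fin d)))
        (P₀ : Measure (EuclideanSpace ℝ (Fin d))) := ENNReal.toReal_nonneg
    have hεn : 0 < εn := by
      rw [hεndef]; positivity
    have hedist : levyProkhorovEDist ((P n) : Measure (EuclideanSpace ℝ (Fin d)))
        (P₀ : Measure (EuclideanSpace ℝ (Fin d))) < ENNReal.ofReal εn := by
      have hne := levyProkhorovEDist_ne_top ((P n) : Measure (EuclideanSpace ℝ (Fin d)))
        (P₀ : Measure (EuclideanSpace ℝ (Fin d)))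
      rw [← ENNReal.ofReal_toReal hne, ENNReal.ofReal_lt_ofReal_iff hεn]
      rw [hεndef]
      exact lt_add_of_pos_right _ (by positivity)
    have hterm : ∀ ψ : Ψ,
        ‖(∫ x, ΦK (φ ψ x) ∂(P n : Measure (EuclideanSpace ℝ (Fin d)))) -
          ∫ x, ΦK (φ ψ x) ∂(P₀ : Measure (EuclideanSpace ℝ (Fin d)))‖
        ≤ εn * (L + 2 * B) := fun ψ =>
      aux_norm_integral_sub_le _ _ hεn hB0 hL hedist
        (fun x => ΦK (φ ψ x)) (fun x => hB _) (fun x y => hgl ψ x y)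
    rw [show (levyProkhorovDist ((P n) : Measure (EuclideanSpace ℝ (Fin d)))
          (P₀ : Measure (EuclideanSpace ℝ (Fin d))) + 1 / (n + 1)) * (L + 2 * B)
        = εn * (L + 2 * B) from rfl]
    exact ciSup_le hterm
  have hbound : Tendsto
      (fun n : ℕ => (levyProkhorovDist ((P n) : Measure (EuclideanSpace ℝ (Fin d)))
        (P₀ : Measure (EuclideanSpace ℝ (Fin d))) + 1 / (n + 1)) * (L + 2 * B))
      atTop (𝓝 0) := by
    have := (hLP.add tendsto_one_div_add_atTop_nhds_zero_nat).mul_const (L + 2 * B)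
    simpa using this
  exact squeeze_zero (fun n => Real.iSup_nonneg fun ψ => norm_nonneg _) key hbound
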